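/- Let σ > 0, suppose k(x,y) = ⟨φ(x), φ(y)⟩ ≤ 1 for all x, y ∈ X, let f(x) = ⟨w, φ(x)⟩ for some w ∈ H, set C₁ = 8 / log(1 + σ⁻²), and let x* ∈ X satisfy f(x*) ≥ f(x) for all x ∈ X. Suppose points x₁, …, x_T ∈ X are chosen so that x*, x₁, …, x_T are pairwise distinct and for every t ∈ {1,…,T}, x_t maximizes m̂_{t−1}(x) + ‖w‖·σ̂_{t−1}(x) over x ∈ X, where m̂ and σ̂ are computed from the (noise-free) observations f(x₁),…,f(x_{t−1}) with regularization σ²I. If γ ∈ ℝ satisfies (1/2)·log det(I_T + σ⁻² K_T) ≤ γ, where K_T is the Gram matrix of the selected points, then Σ_{t=1}^T (f(x*) − f(x_t)) ≤ ‖w‖·√(T·C₁·γ) + 2T·‖w‖·σ, and f(x*) − max_{1≤t≤T} f(x_t) ≤ ‖w‖·√(C₁·γ/T) + 2·‖w‖·σ. -/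

import Mathlib

open scoped RealInnerProductSpace
open Matrix

noncomputable section

variable {X : Type*} {H : Type*} {H' : Type*}
  [NormedAddCommGroup H] [InnerProductSpace ℝ H]
  [NormedAddCommGroup H'] [InnerProductSpace ℝ H']

/-- The kernel associated with the feature map `φ`: `k(x,y) = ⟪φ(x), φ(y)⟫`. -/
def ker (φ : X → H) (x y : X) : ℝ := ⟪φ x, φ y⟫

/-- Gram matrix of the points `xs`. -/
def gram (φ : X → H) {t : ℕ} (xs : Fin t → X) : Matrix (Fin t) (Fin t) ℝ :=
  Matrix.of fun i j => ker φ (xs i) (xs j)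

/-- The vector `k_t(a) = (k(a,x₁),…,k(a,x_t))ᵀ`. -/
def kvec (φ : X → H) {t : ℕ} (xs : Fin t → X) (a : X) : Fin t → ℝ :=
  fun i => ker φ a (xs i)

/-- Regularized mean prediction `m̂_t(a) = k_t(a)ᵀ (K_t + σ²I)⁻¹ (h(x₁),…,h(x_t))ᵀ`. -/
def rmeanFn (σ : ℝ) (φ : X → H) (hfun : X → ℝ) {t : ℕ} (xs : Fin t → X) (a : X) : ℝ :=
  kvec φ xs a ⬝ᵥ ((gram φ xs + σ ^ 2 • 1)⁻¹ *ᵥ (fun i => hfun (xs i)))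

/-- Regularized variance `σ̂_t²(a) = k(a,a) − k_t(a)ᵀ (K_t + σ²I)⁻¹ k_t(a)`. -/
def rvarFn (σ : ℝ) (φ : X → H) {t : ℕ} (xs : Fin t → X) (a : X) : ℝ :=
  ker φ a a - kvec φ xs a ⬝ᵥ ((gram φ xs + σ ^ 2 • 1)⁻¹ *ᵥ kvec φ xs a)

/-- `σ̂_t(a) = √(σ̂_t²(a))`. -/
def rsigmaFn (σ : ℝ) (φ : X → H) {t : ℕ} (xs : Fin t → X) (a : X) : ℝ :=
  Real.sqrt (rvarFn σ φ xs a)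

/-- The first `t` points of the sequence `x` (0-indexed: indices `< t`). -/
def prevPts {T : ℕ} (x : Fin T → X) (t : Fin T) : Fin t.val → X :=
  fun j => x ⟨j.val, j.isLt.trans t.isLt⟩


lemma ker_comm (φ : X → H) (a b : X) : ker φ a b = ker φ b a := real_inner_comm _ _

lemma gram_dot (φ : X → H) {t : ℕ} (xs : Fin t → X) (v : Fin t → ℝ) :
    v ⬝ᵥ (gram φ xs *ᵥ v) = ‖∑ i, v i • φ (xs i)‖ ^ 2 := by
  rw [← real_inner_self_eq_norm_sq, sum_inner]
  simp only [inner_sum, real_inner_smul_left, real_inner_smul_right]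
  simp only [dotProduct, mulVec, _root_.gram, Matrix.of_apply, dotProduct, ker, Finset.mul_sum]
  exact Finset.sum_congr rfl fun i _ => Finset.sum_congr rfl fun j _ => by ring

lemma gram_herm (φ : X → H) {t : ℕ} (xs : Fin t → X) : (gram φ xs).IsHermitian :=
  Matrix.ext fun i j => by
    simp [Matrix.conjTranspose_apply, _root_.gram, ker, real_inner_comm]

lemma reg_posDef (φ : X → H) {t : ℕ} (xs : Fin t → X) {σ : ℝ} (hσ : 0 < σ) :
    (gram φ xs + σ ^ 2 • 1).PosDef := by
  have hG : (gram φ xs).PosSemidef := by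
    refine Matrix.PosSemidef.of_dotProduct_mulVec_nonneg (gram_herm φ xs) fun v => ?_
    have : star v = v := by simp
    rw [this, gram_dot]
    positivity
  have hD : ((σ ^ 2 • 1 : Matrix (Fin t) (Fin t) ℝ)).PosDef := by
    have : (σ ^ 2 • 1 : Matrix (Fin t) (Fin t) ℝ) = Matrix.diagonal (fun _ => σ ^ 2) := by
      rw [Matrix.smul_one_eq_diagonal]
    rw [this]
    exact Matrix.PosDef.diagonal fun _ => by positivity
  exact Matrix.PosDef.posSemidef_add hG hD

section
variable (φ : X → H) {t : ℕ} (xs : Fin t → X) (σ : ℝ) (a : X)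

/-- the interpolation coefficients -/
def alphaVec : Fin t → ℝ :=
  (gram φ xs + σ ^ 2 • 1 : Matrix (Fin t) (Fin t) ℝ)⁻¹ *ᵥ kvec φ xs a

variable {σ}

lemma reg_inv_symm (hσ : 0 < σ) : ((gram φ xs + σ ^ 2 • 1 : Matrix (Fin t) (Fin t) ℝ)⁻¹)ᵀ
    = (gram φ xs + σ ^ 2 • 1 : Matrix (Fin t) (Fin t) ℝ)⁻¹ := by
  have h := ((reg_posDef φ xs hσ).isHermitian.inv).eq
  ext i j
  conv_rhs => rw [← h]
  simp [Matrix.conjTranspose_apply]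

lemma reg_mulVec_inv (hσ : 0 < σ) (v : Fin t → ℝ) :
    (gram φ xs + σ ^ 2 • 1 : Matrix (Fin t) (Fin t) ℝ) *ᵥ
      ((gram φ xs + σ ^ 2 • 1 : Matrix (Fin t) (Fin t) ℝ)⁻¹ *ᵥ v) = v := by
  rw [Matrix.mulVec_mulVec,
    Matrix.mul_nonsing_inv _ (isUnit_iff_ne_zero.mpr (reg_posDef φ xs hσ).det_pos.ne'),
    Matrix.one_mulVec]

lemma rvar_decomp (hσ : 0 < σ) :
    rvarFn σ φ xs a = ‖φ a - ∑ i, alphaVec φ xs σ a i • φ (xs i)‖ ^ 2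
      + σ ^ 2 * (alphaVec φ xs σ a ⬝ᵥ alphaVec φ xs σ a) := by
  set α := alphaVec φ xs σ a with hα
  have hk : (gram φ xs + σ ^ 2 • 1 : Matrix (Fin t) (Fin t) ℝ) *ᵥ α = kvec φ xs a :=
    reg_mulVec_inv φ xs hσ _
  have hdot : kvec φ xs a ⬝ᵥ α = α ⬝ᵥ (gram φ xs *ᵥ α) + σ ^ 2 * (α ⬝ᵥ α) := by
    rw [← hk, Matrix.add_mulVec, dotProduct_comm, dotProduct_add,
      Matrix.smul_mulVec, Matrix.one_mulVec, dotProduct_smul]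
    simp [smul_eq_mul]
  have hinner : ⟪φ a, ∑ i, α i • φ (xs i)⟫ = kvec φ xs a ⬝ᵥ α := by
    rw [inner_sum]
    simp [real_inner_smul_right, kvec, ker, dotProduct, mul_comm]
  have h2 : (⟪∑ i, α i • φ (xs i), φ a⟫ : ℝ) = kvec φ xs a ⬝ᵥ α := by
    rw [real_inner_comm]; exact hinner
  have h3 : (⟪∑ i, α i • φ (xs i), ∑ i, α i • φ (xs i)⟫ : ℝ) = α ⬝ᵥ (gram φ xs *ᵥ α) := by
    rw [real_inner_self_eq_norm_sq, gram_dot]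
  have h1 : (⟪φ a, φ a⟫ : ℝ) = ker φ a a := rfl
  have hnorm : ‖φ a - ∑ i, α i • φ (xs i)‖ ^ 2
      = ker φ a a - 2 * (kvec φ xs a ⬝ᵥ α) + α ⬝ᵥ (gram φ xs *ᵥ α) := by
    rw [← real_inner_self_eq_norm_sq, inner_sub_sub_self, hinner, h2, h3, h1]; ring
  have hquad : rvarFn σ φ xs a = ker φ a a - kvec φ xs a ⬝ᵥ α := rfl
  rw [hquad, hnorm, hdot]; ring

lemma rvar_nonneg (hσ : 0 < σ) : 0 ≤ rvarFn σ φ xs a := by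
  rw [rvar_decomp φ xs a hσ]
  have : (0:ℝ) ≤ alphaVec φ xs σ a ⬝ᵥ alphaVec φ xs σ a := by
    simp only [dotProduct, ← sq]
    positivity
  positivity

lemma rsigma_sq (hσ : 0 < σ) : rsigmaFn σ φ xs a ^ 2 = rvarFn σ φ xs a :=
  Real.sq_sqrt (rvar_nonneg φ xs a hσ)

lemma norm_le_rsigma (hσ : 0 < σ) :
    ‖φ a - ∑ i, alphaVec φ xs σ a i • φ (xs i)‖ ≤ rsigmaFn σ φ xs a := by
  rw [rsigmaFn, ← Real.sqrt_sq (norm_nonneg (φ a - ∑ i, alphaVec φ xs σ a i • φ (xs i)))]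
  apply Real.sqrt_le_sqrt
  rw [rvar_decomp φ xs a hσ]
  have : (0:ℝ) ≤ alphaVec φ xs σ a ⬝ᵥ alphaVec φ xs σ a := by
    simp only [dotProduct, ← sq]; positivity
  nlinarith

lemma rvar_le_kaa (hσ : 0 < σ) : rvarFn σ φ xs a ≤ ker φ a a := by
  have hpsd := ((reg_posDef φ xs hσ).inv).posSemidef
  have h := hpsd.dotProduct_mulVec_nonneg (kvec φ xs a)
  rw [show star (kvec φ xs a) = kvec φ xs a by simp] at h
  simp only [rvarFn]
  linarith

lemma mean_err (w : H) (f : X → ℝ) (hf : ∀ b, f b = ⟪w, φ b⟫) (hσ : 0 < σ) :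
    |f a - rmeanFn σ φ f xs a| ≤ ‖w‖ * rsigmaFn σ φ xs a := by
  set α := alphaVec φ xs σ a with hα
  have hsymm := reg_inv_symm φ xs hσ
  have hmean : rmeanFn σ φ f xs a = ⟪w, ∑ i, α i • φ (xs i)⟫ := by
    rw [rmeanFn, Matrix.dotProduct_mulVec, ← Matrix.mulVec_transpose, hsymm, inner_sum]
    simp only [real_inner_smul_right]
    simp [dotProduct, hα, alphaVec, hf, mul_comm]
  have hfa : f a - rmeanFn σ φ f xs a = ⟪w, φ a - ∑ i, α i • φ (xs i)⟫ := by
    rw [hmean, hf, inner_sub_right]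
  rw [hfa]
  calc |(⟪w, φ a - ∑ i, α i • φ (xs i)⟫ : ℝ)| ≤ ‖w‖ * ‖φ a - ∑ i, α i • φ (xs i)‖ :=
        abs_real_inner_le_norm _ _
    _ ≤ ‖w‖ * rsigmaFn σ φ xs a :=
        mul_le_mul_of_nonneg_left (norm_le_rsigma φ xs a hσ) (norm_nonneg w)
end

lemma det_step (φ : X → H) {σ : ℝ} (hσ : 0 < σ) (n : ℕ) (y : ℕ → X) :
    (gram φ (fun i : Fin (n+1) => y i) + σ ^ 2 • 1).det
      = (gram φ (fun i : Fin n => y i) + σ ^ 2 • 1).det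
        * (σ ^ 2 + rvarFn σ φ (fun i : Fin n => y i) (y n)) := by
  set ys : Fin n → X := fun i => y i with hys
  set A : Matrix (Fin (n+1)) (Fin (n+1)) ℝ := gram φ (fun i : Fin (n+1) => y i) + σ ^ 2 • 1 with hA
  set An : Matrix (Fin n) (Fin n) ℝ := gram φ ys + σ ^ 2 • 1 with hAn
  set b : Matrix (Fin n) (Fin 1) ℝ := Matrix.of fun i _ => ker φ (y i) (y n) with hb
  set c : Matrix (Fin 1) (Fin n) ℝ := Matrix.of fun _ j => ker φ (y n) (y j) with hc
  set d : Matrix (Fin 1) (Fin 1) ℝ := Matrix.of fun _ _ => ker φ (y n) (y n) + σ ^ 2 with hd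
  have hblock : A.submatrix (finSumFinEquiv (m := n) (n := 1)) finSumFinEquiv
      = Matrix.fromBlocks An b c d := by
    ext i j
    cases i with
    | inl i =>
      cases j with
      | inl j =>
        simp only [Matrix.submatrix_apply, finSumFinEquiv_apply_left,
          Matrix.fromBlocks_apply₁₁, hA, hAn, Matrix.add_apply, Matrix.smul_apply,
          Matrix.one_apply, _root_.gram, Matrix.of_apply, smul_eq_mul, hys]
        simp [Fin.ext_iff]
      | inr j =>
        simp only [Matrix.submatrix_apply, finSumFinEquiv_apply_left,
          finSumFinEquiv_apply_right, Matrix.fromBlocks_apply₁₂, hA, hb, Matrix.add_apply,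
          Matrix.smul_apply, Matrix.one_apply, _root_.gram, Matrix.of_apply, smul_eq_mul, hys]
        have hne : ∀ j' : Fin 1, (Fin.castAdd 1 i : Fin (n+1)) ≠ Fin.natAdd n j' := by
          intro j'; simp [Fin.ext_iff]; omega
        simp [hne]
    | inr i =>
      cases j with
      | inl j =>
        simp only [Matrix.submatrix_apply, finSumFinEquiv_apply_left,
          finSumFinEquiv_apply_right, Matrix.fromBlocks_apply₂₁, hA, hc, Matrix.add_apply,
          Matrix.smul_apply, Matrix.one_apply, _root_.gram, Matrix.of_apply, smul_eq_mul, hys]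
        have hne : ∀ i' : Fin 1, (Fin.natAdd n i' : Fin (n+1)) ≠ Fin.castAdd 1 j := by
          intro i'; simp [Fin.ext_iff]; omega
        simp [hne]
      | inr j =>
        simp only [Matrix.submatrix_apply, finSumFinEquiv_apply_right,
          Matrix.fromBlocks_apply₂₂, hA, hd, Matrix.add_apply, Matrix.smul_apply,
          Matrix.one_apply, _root_.gram, Matrix.of_apply, smul_eq_mul]
        have h1 : (Fin.natAdd n i : Fin (n+1)) = Fin.natAdd n j := by
          simp [Fin.ext_iff, Fin.fin_one_eq_zero i, Fin.fin_one_eq_zero j]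
        simp [h1, Fin.fin_one_eq_zero i, Fin.fin_one_eq_zero j]
  have hpd : An.PosDef := reg_posDef φ ys hσ
  haveI : Invertible An := An.invertibleOfIsUnitDet (isUnit_iff_ne_zero.mpr hpd.det_pos.ne')
  have hdet : A.det = An.det * (d - c * ⅟An * b).det := by
    rw [← Matrix.det_submatrix_equiv_self (finSumFinEquiv (m := n) (n := 1)) A, hblock,
      Matrix.det_fromBlocks₁₁]
  rw [hdet]
  congr 1
  rw [Matrix.det_fin_one, Matrix.invOf_eq_nonsing_inv]
  have hcb : (c * An⁻¹ * b) 0 0 = kvec φ ys (y n) ⬝ᵥ (An⁻¹ *ᵥ kvec φ ys (y n)) := by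
    rw [Matrix.mul_assoc, Matrix.mul_apply]
    simp only [dotProduct, Matrix.mulVec, dotProduct]
    refine Finset.sum_congr rfl fun i _ => ?_
    rw [Matrix.mul_apply]
    congr 1
    refine Finset.sum_congr rfl fun x _ => ?_
    congr 1
    simp only [hb, Matrix.of_apply, kvec, hys]
    exact (ker_comm φ (y n) (y x)).symm
  rw [Matrix.sub_apply, hcb]
  simp only [rvarFn, hd, Matrix.of_apply, hAn]
  ring

lemma det_telescope (φ : X → H) {σ : ℝ} (hσ : 0 < σ) (y : ℕ → X) :
    ∀ n : ℕ, (gram φ (fun i : Fin n => y i) + σ ^ 2 • 1).det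
      = ∏ t : Fin n, (σ ^ 2 + rvarFn σ φ (fun j : Fin t.val => y j) (y t)) := by
  intro n
  induction n with
  | zero => simp
  | succ n ih =>
    rw [det_step φ hσ n y, ih, Fin.prod_univ_castSucc]
    rfl

lemma det_one_add (φ : X → H) {σ : ℝ} (hσ : 0 < σ) (y : ℕ → X) (n : ℕ) :
    (1 + (σ^2)⁻¹ • gram φ (fun i : Fin n => y i)).det
      = ∏ t : Fin n, (1 + (σ^2)⁻¹ * rvarFn σ φ (fun j : Fin t.val => y j) (y t)) := by
  have h : (1 + (σ^2)⁻¹ • gram φ (fun i : Fin n => y i))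
      = (σ^2)⁻¹ • (gram φ (fun i : Fin n => y i) + σ^2 • 1) := by
    rw [smul_add, smul_smul, inv_mul_cancel₀ (by positivity), one_smul, add_comm]
  have hpow : ((σ^2)⁻¹ : ℝ) ^ (Fintype.card (Fin n)) = ∏ _t : Fin n, (σ^2)⁻¹ := by
    simp
  rw [h, Matrix.det_smul, hpow, det_telescope φ hσ y n, ← Finset.prod_mul_distrib]
  refine Finset.prod_congr rfl fun t _ => ?_
  field_simp

lemma log_one_add_mul_le {c s : ℝ} (hc : 0 < c) (hs0 : 0 ≤ s) (hs1 : s ≤ 1) :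
    s * Real.log (1 + c) ≤ Real.log (1 + c * s) := by
  have hconc := strictConcaveOn_log_Ioi.concaveOn
  have hm1 : (1 + c) ∈ Set.Ioi (0:ℝ) := by simp only [Set.mem_Ioi]; linarith
  have hm2 : (1:ℝ) ∈ Set.Ioi (0:ℝ) := by norm_num
  have hb : (0:ℝ) ≤ 1 - s := sub_nonneg.mpr hs1
  have hab : s + (1 - s) = 1 := by ring
  have h := hconc.2 hm1 hm2 hs0 hb hab
  have harg : s • (1 + c) + (1 - s) • (1:ℝ) = 1 + c * s := by
    simp only [smul_eq_mul]; ring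
  rw [harg] at h
  simpa [smul_eq_mul] using h


/-- Corollary 1 (regret bounds for the regularized algorithm run on noise-free data). -/
theorem statement_3 [Nonempty X]
    (φ : X → H) (w : H) (f : X → ℝ) (hf : ∀ a, f a = ⟪w, φ a⟫)
    (hk : ∀ a b : X, ker φ a b ≤ 1)
    (σ : ℝ) (hσ : 0 < σ)
    (T : ℕ) (hT : 0 < T)
    (xstar : X) (hstar : ∀ a : X, f a ≤ f xstar)
    (x : Fin T → X)
    (hinj : Function.Injective x) (hne : ∀ t : Fin T, x t ≠ xstar)
    (hacq : ∀ t : Fin T, ∀ a : X,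
      rmeanFn σ φ f (prevPts x t) a + ‖w‖ * rsigmaFn σ φ (prevPts x t) a ≤
        rmeanFn σ φ f (prevPts x t) (x t) + ‖w‖ * rsigmaFn σ φ (prevPts x t) (x t))
    (γ : ℝ)
    (hγ : (1/2) * Real.log ((1 + (σ^2)⁻¹ • gram φ x).det) ≤ γ) :
    (∑ t : Fin T, (f xstar - f (x t))) ≤
        ‖w‖ * Real.sqrt ((T : ℝ) * (8 / Real.log (1 + (σ^2)⁻¹)) * γ) + 2 * (T : ℝ) * ‖w‖ * σ ∧
    f xstar - (Finset.univ.sup' (Finset.univ_nonempty_iff.mpr (Fin.pos_iff_nonempty.mp hT))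
        fun t => f (x t)) ≤
      ‖w‖ * Real.sqrt ((8 / Real.log (1 + (σ^2)⁻¹)) * γ / (T : ℝ)) + 2 * ‖w‖ * σ := by
  classical
  set L := Real.log (1 + (σ^2)⁻¹) with hLdef
  have hL0 : 0 < L := by
    have h1 : (0:ℝ) < (σ^2)⁻¹ := by positivity
    exact Real.log_pos (by linarith)
  set y : ℕ → X := fun n => if h : n < T then x ⟨n, h⟩ else x ⟨0, hT⟩ with hy
  have hxy : (fun i : Fin T => y i) = x := by
    funext i; simp [hy, i.isLt]
  have hyt : ∀ t : Fin T, y t = x t := fun t => by simp [hy, t.isLt]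
  have hprev : ∀ t : Fin T, prevPts x t = (fun j : Fin t.val => y j) := by
    intro t; funext j
    have hj : (j : ℕ) < T := j.isLt.trans t.isLt
    simp [prevPts, hy, hj]
  set s : Fin T → ℝ := fun t => rsigmaFn σ φ (prevPts x t) (x t) with hs
  set v : Fin T → ℝ := fun t => rvarFn σ φ (prevPts x t) (x t) with hv
  have hs0 : ∀ t, 0 ≤ s t := fun t => Real.sqrt_nonneg _
  have hsv : ∀ t, s t ^ 2 = v t := fun t => rsigma_sq φ _ _ hσ
  have hv0 : ∀ t, 0 ≤ v t := fun t => rvar_nonneg φ _ _ hσ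
  have hv1 : ∀ t, v t ≤ 1 := fun t => (rvar_le_kaa φ _ _ hσ).trans (hk _ _)
  -- instantaneous regret bound
  have hreg : ∀ t : Fin T, f xstar - f (x t) ≤ 2 * ‖w‖ * s t := by
    intro t
    have h1 := abs_le.mp (mean_err φ (prevPts x t) xstar w f hf hσ)
    have h2 := abs_le.mp (mean_err φ (prevPts x t) (x t) w f hf hσ)
    have h3 := hacq t xstar
    have : 2 * ‖w‖ * s t = ‖w‖ * s t + ‖w‖ * s t := by ring
    rw [this]
    simp only [hs]
    linarith [h1.1, h1.2, h2.1, h2.2]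
  -- determinant identity
  have hdet : (1 + (σ^2)⁻¹ • gram φ x).det = ∏ t : Fin T, (1 + (σ^2)⁻¹ * v t) := by
    rw [← hxy, det_one_add φ hσ y T]
    refine Finset.prod_congr rfl fun t _ => ?_
    simp only [hv]
    rw [hprev t, ← hyt t]
  have hfac : ∀ t : Fin T, (0:ℝ) < 1 + (σ^2)⁻¹ * v t := by
    intro t
    have h1 : (0:ℝ) ≤ (σ^2)⁻¹ * v t := mul_nonneg (by positivity) (hv0 t)
    linarith
  have hdet1 : (1:ℝ) ≤ (1 + (σ^2)⁻¹ • gram φ x).det := by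
    rw [hdet]
    calc (1:ℝ) = ∏ _t : Fin T, 1 := by simp
      _ ≤ ∏ t : Fin T, (1 + (σ^2)⁻¹ * v t) := by
          refine Finset.prod_le_prod (fun i _ => zero_le_one) fun i _ => ?_
          have h1 : (0:ℝ) ≤ (σ^2)⁻¹ * v i := mul_nonneg (by positivity) (hv0 i)
          linarith
  have hγ0 : 0 ≤ γ :=
    le_trans (by linarith [Real.log_nonneg hdet1]) hγ
  have hlogdet : Real.log ((1 + (σ^2)⁻¹ • gram φ x).det)
      = ∑ t : Fin T, Real.log (1 + (σ^2)⁻¹ * v t) := by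
    rw [hdet, Real.log_prod]
    exact fun t _ => (hfac t).ne'
  -- sum of variances bound
  have hsumv : ∑ t : Fin T, v t ≤ 2 * γ / L := by
    have h1 : ∀ t : Fin T, v t ≤ Real.log (1 + (σ^2)⁻¹ * v t) / L := by
      intro t
      have := log_one_add_mul_le (c := (σ^2)⁻¹) (s := v t) (by positivity) (hv0 t) (hv1 t)
      rw [le_div_iff₀ hL0]
      calc v t * L = v t * Real.log (1 + (σ^2)⁻¹) := by rw [hLdef]
        _ ≤ Real.log (1 + (σ^2)⁻¹ * v t) := this
    calc ∑ t : Fin T, v t ≤ ∑ t : Fin T, Real.log (1 + (σ^2)⁻¹ * v t) / L :=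
          Finset.sum_le_sum fun t _ => h1 t
      _ = (∑ t : Fin T, Real.log (1 + (σ^2)⁻¹ * v t)) / L := by
          rw [Finset.sum_div]
      _ = Real.log ((1 + (σ^2)⁻¹ • gram φ x).det) / L := by rw [hlogdet]
      _ ≤ 2 * γ / L := by
          have hld : Real.log ((1 + (σ ^ 2)⁻¹ • gram φ x).det) ≤ 2 * γ := by linarith
          gcongr
  -- sum of sigmas via Cauchy–Schwarz
  have hsqrt4 : Real.sqrt 4 = 2 := by
    rw [show (4:ℝ) = 2^2 by norm_num, Real.sqrt_sq (by norm_num : (0:ℝ) ≤ 2)]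
  have hsums : ∑ t : Fin T, s t ≤ Real.sqrt ((T:ℝ) * (2 * γ / L)) := by
    have hcheb : (∑ t : Fin T, s t) ^ 2 ≤ (T:ℝ) * ∑ t : Fin T, s t ^ 2 := by
      have := sq_sum_le_card_mul_sum_sq (s := (Finset.univ : Finset (Fin T))) (f := s)
      simpa using this
    have h2 : (∑ t : Fin T, s t ^ 2) = ∑ t : Fin T, v t :=
      Finset.sum_congr rfl fun t _ => hsv t
    have hT0 : (0:ℝ) ≤ T := by positivity
    have h3 : (∑ t : Fin T, s t) ^ 2 ≤ (T:ℝ) * (2 * γ / L) := by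
      rw [h2] at hcheb
      exact hcheb.trans (mul_le_mul_of_nonneg_left hsumv hT0)
    have h4 : 0 ≤ ∑ t : Fin T, s t := Finset.sum_nonneg fun t _ => hs0 t
    calc ∑ t : Fin T, s t = Real.sqrt ((∑ t : Fin T, s t) ^ 2) := (Real.sqrt_sq h4).symm
      _ ≤ Real.sqrt ((T:ℝ) * (2 * γ / L)) := Real.sqrt_le_sqrt h3
  have hkey : ∑ t : Fin T, (f xstar - f (x t)) ≤ ‖w‖ * Real.sqrt ((T:ℝ) * (8 / L) * γ) := by
    have h1 : ∑ t : Fin T, (f xstar - f (x t)) ≤ 2 * ‖w‖ * ∑ t : Fin T, s t := by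
      rw [Finset.mul_sum]
      exact Finset.sum_le_sum fun t _ => hreg t
    have h5 : 2 * ‖w‖ * ∑ t : Fin T, s t ≤ 2 * ‖w‖ * Real.sqrt ((T:ℝ) * (2 * γ / L)) :=
      mul_le_mul_of_nonneg_left hsums (by positivity)
    have h6 : 2 * ‖w‖ * Real.sqrt ((T:ℝ) * (2 * γ / L)) = ‖w‖ * Real.sqrt ((T:ℝ) * (8 / L) * γ) := by
      have harg : (T:ℝ) * (8 / L) * γ = 4 * ((T:ℝ) * (2 * γ / L)) := by
        field_simp; ring
      rw [harg, Real.sqrt_mul (by norm_num : (0:ℝ) ≤ 4), hsqrt4]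
      ring
    linarith
  constructor
  · have h7 : 0 ≤ 2 * (T:ℝ) * ‖w‖ * σ := by positivity
    linarith
  · set M := Finset.univ.sup' (Finset.univ_nonempty_iff.mpr (Fin.pos_iff_nonempty.mp hT))
      (fun t => f (x t)) with hM
    have hMt : ∀ t : Fin T, f xstar - M ≤ f xstar - f (x t) := by
      intro t
      have := Finset.le_sup' (f := fun t : Fin T => f (x t)) (Finset.mem_univ t)
      simp only [← hM] at this
      linarith
    have hT0 : (0:ℝ) < T := by exact_mod_cast hT
    have hTsum : (T:ℝ) * (f xstar - M) ≤ ∑ t : Fin T, (f xstar - f (x t)) := by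
      calc (T:ℝ) * (f xstar - M) = ∑ _t : Fin T, (f xstar - M) := by
            rw [Finset.sum_const]
            simp [mul_comm]
        _ ≤ ∑ t : Fin T, (f xstar - f (x t)) := Finset.sum_le_sum fun t _ => hMt t
    have hTsq : ‖w‖ * Real.sqrt ((T:ℝ) * (8 / L) * γ)
        = (T:ℝ) * (‖w‖ * Real.sqrt ((8 / L) * γ / (T:ℝ))) := by
      have hnn : (0:ℝ) ≤ (8 / L) * γ / (T:ℝ) := by positivity
      have harg : (T:ℝ) * (8 / L) * γ = ((8 / L) * γ / (T:ℝ)) * (T:ℝ)^2 := by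
        field_simp
      rw [harg, Real.sqrt_mul hnn, Real.sqrt_sq hT0.le]
      ring
    have h8 : (T:ℝ) * (f xstar - M) ≤ (T:ℝ) * (‖w‖ * Real.sqrt ((8 / L) * γ / (T:ℝ))) := by
      rw [← hTsq]
      exact hTsum.trans hkey
    have h9 := (mul_le_mul_iff_right₀ hT0).mp h8
    have h10 : (0:ℝ) ≤ 2 * ‖w‖ * σ := by positivity
    linarith
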